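/- Theorem (non-interfering lower bound): Let C_1,…,C_β be a derivation from α input clauses ending in the empty clause, where every non-input clause is either a learned clause or a resolvent of two earlier clauses. Let Q be a finite set of assignments such that (a) each M ∈ Q satisfies all input clauses, (b) each M ∈ Q has a distinguished conflict set Conf(M) ⊆ M with the property that for every learned clause C with ¬C ⊆ M one has Conf(M) ⊆ ¬C, and (c) Q is non-interfering: for distinct M, M' ∈ Q, Conf(M) ⊄ M'. Then the derivation contains at least |Q| learned clauses. -/

import Mathlib

/-- Negation of a literal. -/
def Lit.neg {V : Type} (ℓ : V × Bool) : V × Bool := (ℓ.1, !ℓ.2)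

lemma Lit.neg_neg {V : Type} (ℓ : V × Bool) : Lit.neg (Lit.neg ℓ) = ℓ := by
  simp [Lit.neg]

lemma not_both {V : Type} (M : Set (V × Bool))
    (hx : ∀ v, Xor' ((v, true) ∈ M) ((v, false) ∈ M)) (ℓ : V × Bool) :
    ¬ (ℓ ∈ M ∧ Lit.neg ℓ ∈ M) := by
  obtain ⟨v, b⟩ := ℓ
  rcases hx v with ⟨h1, h2⟩ | ⟨h1, h2⟩ <;> cases b <;> simp [Lit.neg] at * <;> tauto

/-- Non-interfering lower bound: given a derivation from `α` input clauses
ending in the empty clause, and a finite non-interfering set `Q` of critical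
assignments (each satisfying the input clauses, with a conflict set contained
in it that is included in the negation of every learned clause it falsifies),
the derivation contains at least `|Q|` learned clauses. -/
theorem stmt5 {V : Type} [DecidableEq V] (C : ℕ → Finset (V × Bool))
    (Learned : ℕ → Prop) [DecidablePred Learned] (α β : ℕ) (hαβ : α ≤ β)
    (hder : ∀ k, α ≤ k → k ≤ β → Learned k ∨
      ∃ i < k, ∃ j < k, ∃ ℓ ∈ C i, Lit.neg ℓ ∈ C j ∧
        C k = (C i).erase ℓ ∪ (C j).erase (Lit.neg ℓ))
    (hempty : C β = ∅)
    (Q : Finset (Set (V × Bool)))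
    (Conf : Set (V × Bool) → Set (V × Bool))
    (hQassign : ∀ M ∈ Q, ∀ v : V, Xor' ((v, true) ∈ M) ((v, false) ∈ M))
    (hQinput : ∀ M ∈ Q, ∀ i < α, ∃ ℓ ∈ C i, ℓ ∈ M)
    (hQconf : ∀ M ∈ Q, Conf M ⊆ M)
    (hQcrit : ∀ M ∈ Q, ∀ k, α ≤ k → k ≤ β → Learned k →
      Lit.neg '' (C k : Set (V × Bool)) ⊆ M →
      Conf M ⊆ Lit.neg '' (C k : Set (V × Bool)))
    (hnon : ∀ M ∈ Q, ∀ M' ∈ Q, M ≠ M' → ¬ Conf M ⊆ M') :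
    Q.card ≤ ((Finset.Icc α β).filter Learned).card := by
  classical
  -- key: every M in Q falsifies some learned clause
  have key : ∀ M ∈ Q, ∃ k, α ≤ k ∧ k ≤ β ∧ Learned k ∧
      Lit.neg '' (C k : Set (V × Bool)) ⊆ M := by
    intro M hM
    have step : ∀ k, k ≤ β → Lit.neg '' (C k : Set (V × Bool)) ⊆ M →
        ∃ k', α ≤ k' ∧ k' ≤ β ∧ Learned k' ∧
          Lit.neg '' (C k' : Set (V × Bool)) ⊆ M := by
      intro k
      induction k using Nat.strong_induction_on with
      | _ k ih =>
        intro hkβ hfals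
        by_cases hkα : k < α
        · obtain ⟨ℓ, hℓC, hℓM⟩ := hQinput M hM k hkα
          have hnegM : Lit.neg ℓ ∈ M := hfals ⟨ℓ, by simpa using hℓC, rfl⟩
          exact absurd ⟨hℓM, hnegM⟩ (not_both M (hQassign M hM) ℓ)
        · push_neg at hkα
          rcases hder k hkα hkβ with hL | ⟨i, hi, j, hj, ℓ, hℓi, hℓj, hCk⟩
          · exact ⟨k, hkα, hkβ, hL, hfals⟩
          · -- M contains ℓ or neg ℓ
            have hone : ℓ ∈ M ∨ Lit.neg ℓ ∈ M := by
              obtain ⟨v, b⟩ := ℓ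
              rcases hQassign M hM v with ⟨h1, h2⟩ | ⟨h1, h2⟩ <;>
                cases b <;> simp [Lit.neg] <;> tauto
            have hrest : ∀ m : V × Bool, m ∈ C k → Lit.neg m ∈ M := by
              intro m hm
              exact hfals ⟨m, by simpa using hm, rfl⟩
            rcases hone with hℓM | hnℓM
            · -- M falsifies C j
              have hfj : Lit.neg '' (C j : Set (V × Bool)) ⊆ M := by
                rintro _ ⟨m, hm, rfl⟩
                simp only [Finset.coe_sort_coe, Finset.mem_coe] at hm
                by_cases hme : m = Lit.neg ℓ
                · subst hme; rwa [Lit.neg_neg]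
                · exact hrest m (by
                    rw [hCk]
                    exact Finset.mem_union_right _ (Finset.mem_erase.2 ⟨hme, hm⟩))
              exact ih j hj (le_of_lt (lt_of_lt_of_le hj hkβ)) hfj
            · -- M falsifies C i
              have hfi : Lit.neg '' (C i : Set (V × Bool)) ⊆ M := by
                rintro _ ⟨m, hm, rfl⟩
                simp only [Finset.coe_sort_coe, Finset.mem_coe] at hm
                by_cases hme : m = ℓ
                · subst hme; exact hnℓM
                · exact hrest m (by
                    rw [hCk]
                    exact Finset.mem_union_left _ (Finset.mem_erase.2 ⟨hme, hm⟩))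
              exact ih i hi (le_of_lt (lt_of_lt_of_le hi hkβ)) hfi
    exact step β le_rfl (by simp [hempty])
  -- choose the witness
  set f : Set (V × Bool) → ℕ := fun M =>
    if h : M ∈ Q then (key M h).choose else 0 with hf
  apply Finset.card_le_card_of_injOn f
  · intro M hM
    have hs := (key M hM).choose_spec
    simp only [hf, Finset.mem_coe, dif_pos (show M ∈ Q from hM), Finset.mem_filter, Finset.mem_Icc]
    exact ⟨⟨hs.1, hs.2.1⟩, hs.2.2.1⟩
  · intro M hM M' hM' hfe
    simp only [Finset.mem_coe] at hM hM'
    by_contra hne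
    have hs := (key M hM).choose_spec
    have hs' := (key M' hM').choose_spec
    simp only [hf, dif_pos hM, dif_pos hM'] at hfe
    have hsub : Conf M ⊆ M' := by
      have h1 : Conf M ⊆ Lit.neg '' (C (key M hM).choose : Set (V × Bool)) :=
        hQcrit M hM _ hs.1 hs.2.1 hs.2.2.1 hs.2.2.2
      rw [hfe] at h1
      exact h1.trans hs'.2.2.2
    exact hnon M hM M' hM' hne hsub
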